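/- Let n ≥ 1 be a natural number and σ a regular infinite cardinal. Suppose {A_α : α < κ} is a point-finite family of sets satisfying |A_α| ≤ σ^{+n} for each α and |A_α ∩ A_β| ≤ σ for each pair of distinct α, β < κ. Then there are sets A'_α ⊆ A_α with |A'_α| ≤ σ for each α such that the family {A_α \ A'_α : α < κ} is point-< n+1. -/

import Mathlib

set_option autoImplicit false
open Cardinal

universe u v

/-- A family `⟨A_α⟩_{α ∈ ι}` of sets is point-`< τ` if for every index set `I ⊆ ι` of
cardinality `τ` the intersection `⋂_{α ∈ I} A_α` is empty. -/
def PointLt {ι : Type u} {X : Type v} (τ : Cardinal.{u}) (A : ι → Set X) : Prop :=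
  ∀ I : Set ι, Cardinal.mk I = τ → ⋂ α ∈ I, A α = ∅

section AuxHelpers
universe w w'

private lemma le_succIter (σ : Cardinal.{w}) (n : ℕ) : σ ≤ (Order.succ)^[n] σ := by
  induction n with
  | zero => simp
  | succ n ihn =>
    rw [Function.iterate_succ_apply']
    exact ihn.trans (Order.le_succ _)

private lemma lift_succIter (σ : Cardinal.{w}) (n : ℕ) :
    Cardinal.lift.{w'} ((Order.succ)^[n] σ) = (Order.succ)^[n] (Cardinal.lift.{w'} σ) := by
  induction n with
  | zero => simp
  | succ n ihn =>
    rw [Function.iterate_succ_apply', Function.iterate_succ_apply', Cardinal.lift_succ, ihn]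

private lemma mk_biUnion_le' {ι X : Type w} (s : Set ι) (f : ι → Set X) {κ : Cardinal.{w}}
    (hκ : ℵ₀ ≤ κ) (hs : #s ≤ κ) (hf : ∀ i ∈ s, #(f i) ≤ κ) : #(⋃ i ∈ s, f i) ≤ κ := by
  rcases isEmpty_or_nonempty ↥s with h | h
  · have he : (⋃ i ∈ s, f i) = ∅ := by
      apply Set.eq_empty_iff_forall_notMem.mpr
      intro x hx
      obtain ⟨i, hi, _⟩ := Set.mem_iUnion₂.mp hx
      exact h.elim ⟨i, hi⟩
    rw [he]
    simp
  · refine (Cardinal.mk_biUnion_le f s).trans ?_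
    have h1 : ⨆ x : s, #(f x) ≤ κ := ciSup_le' fun x => hf x x.2
    calc #↑s * ⨆ x : s, #(f ↑x) ≤ κ * κ := mul_le_mul' hs h1
    _ = κ := Cardinal.mul_eq_self hκ

private lemma mk_iUnion_nat_le {X : Type w} (f : ℕ → Set X) {κ : Cardinal.{w}} (hκ : ℵ₀ ≤ κ)
    (hf : ∀ k, #(f k) ≤ κ) : #(⋃ k, f k) ≤ κ := by
  have he : (⋃ k, f k) = ⋃ k : ULift.{w} ℕ, f k.down := by
    ext x
    constructor
    · rintro hx
      obtain ⟨k, hk⟩ := Set.mem_iUnion.mp hx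
      exact Set.mem_iUnion.mpr ⟨⟨k⟩, hk⟩
    · rintro hx
      obtain ⟨k, hk⟩ := Set.mem_iUnion.mp hx
      exact Set.mem_iUnion.mpr ⟨k.down, hk⟩
  rw [he]
  refine (Cardinal.mk_iUnion_le _).trans ?_
  have h1 : #(ULift.{w} ℕ) = ℵ₀ := by
    rw [Cardinal.mk_uLift, Cardinal.mk_nat, Cardinal.lift_aleph0]
  have h2 : ⨆ k : ULift.{w} ℕ, #(f k.down) ≤ κ := ciSup_le' fun k => hf k.down
  calc #(ULift.{w} ℕ) * ⨆ k : ULift.{w} ℕ, #(f k.down) ≤ κ * κ :=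
        mul_le_mul' ((le_of_eq h1).trans hκ) h2
  _ = κ := Cardinal.mul_eq_self hκ

private lemma pointLt_mono {ι : Type w} {X : Type w'} {τ : Cardinal.{w}} {A B : ι → Set X}
    (h : ∀ α, B α ⊆ A α) (hA : PointLt τ A) : PointLt τ B := by
  intro I hI
  have h2 := hA I hI
  apply Set.eq_empty_of_subset_empty
  rw [← h2]
  exact Set.iInter₂_mono fun α _ => h α

private lemma pointLt_restrict {ι : Type w} {X : Type w'} {τ : Cardinal.{w}} {A : ι → Set X}
    (hA : PointLt τ A) (S : Set ι) : PointLt τ (fun b : S => A ↑b) := by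
  intro I hI
  have h1 : #(Subtype.val '' I : Set ι) = τ := by
    rw [Cardinal.mk_image_eq Subtype.val_injective]
    exact hI
  have h2 := hA _ h1
  rw [Set.biInter_image] at h2
  exact h2

private lemma fiber_finite {ι : Type w} {X : Type w'} {A : ι → Set X}
    (hpf : PointLt ℵ₀ A) (x : X) : {α | x ∈ A α}.Finite := by
  by_contra h
  rw [← Set.not_infinite, not_not] at h
  let f := h.natEmbedding
  have hinj : Function.Injective (fun k : ℕ => ((f k : ι))) :=
    fun a b hab => f.injective (Subtype.ext hab)
  set I : Set ι := Set.range (fun k : ℕ => ((f k : ι))) with hIdef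
  have hI : #I = ℵ₀ := by
    have := Cardinal.mk_range_eq_of_injective hinj
    rw [Cardinal.mk_nat, Cardinal.lift_aleph0] at this
    exact Cardinal.lift_eq_aleph0.mp this
  have h2 := hpf I hI
  have hx : x ∈ ⋂ α ∈ I, A α := by
    apply Set.mem_iInter₂.mpr
    rintro α ⟨k, rfl⟩
    exact (f k).2
  rw [h2] at hx
  exact hx

end AuxHelpers

section AuxMain
universe w

private def AuxStmt (n : ℕ) : Prop :=
  ∀ {ι X : Type w} (σ : Cardinal.{w}), ℵ₀ ≤ σ → ∀ (A : ι → Set X),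
    PointLt ℵ₀ A → (∀ α, #(A α) ≤ (Order.succ)^[n] σ) →
    (∀ α β, α ≠ β → #↥(A α ∩ A β) ≤ σ) →
    ∃ A' : ι → Set X, (∀ α, A' α ⊆ A α ∧ #(A' α) ≤ σ) ∧
      PointLt ((n : Cardinal.{w}) + 1) (fun α => A α \ A' α)

private lemma aux_zero : AuxStmt.{w} 0 := by
  intro ι X σ hσ A hpf hcard hint
  refine ⟨A, fun α => ⟨subset_rfl, by simpa using hcard α⟩, ?_⟩
  intro I hI
  have hne : Nonempty I := by
    apply Cardinal.mk_ne_zero_iff.mp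
    rw [hI]
    simp
  obtain ⟨⟨α, hα⟩⟩ := hne
  apply Set.eq_empty_iff_forall_notMem.mpr
  intro x hx
  have h2 := Set.mem_iInter₂.mp hx α hα
  exact h2.2 h2.1

private lemma aux_small (n : ℕ) (ih : AuxStmt.{w} n) {ι X : Type w} (σ : Cardinal.{w})
    (hσ : ℵ₀ ≤ σ) (A : ι → Set X) (hpf : PointLt ℵ₀ A)
    (hcard : ∀ α, #(A α) ≤ (Order.succ)^[n+1] σ)
    (hint : ∀ α β, α ≠ β → #↥(A α ∩ A β) ≤ σ)
    (hι : #ι ≤ (Order.succ)^[n+1] σ) :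
    ∃ A' : ι → Set X, (∀ α, A' α ⊆ A α ∧ #(A' α) ≤ σ) ∧
      PointLt (((n+1 : ℕ) : Cardinal.{w}) + 1) (fun α => A α \ A' α) := by
  classical
  set lam : Cardinal.{w} := (Order.succ)^[n] σ with hlamdef
  set μ : Cardinal.{w} := Order.succ lam with hμdef
  have hiter : (Order.succ)^[n+1] σ = μ := by
    rw [hμdef, hlamdef, Function.iterate_succ_apply']
  have hl0 : ℵ₀ ≤ lam := hσ.trans (le_succIter σ n)
  have hsl : σ ≤ lam := le_succIter σ n
  have hlm : lam ≤ μ := Order.le_succ lam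
  have hm0 : ℵ₀ ≤ μ := hl0.trans hlm
  -- the well-ordered index
  set O : Type w := μ.ord.ToType with hOdef
  have hmkO : #O = μ := Cardinal.mk_ord_toType μ
  obtain ⟨e⟩ : Nonempty (ι ↪ O) := by
    rw [← Cardinal.le_def, hmkO, ← hiter]
    exact hι
  have wfO : WellFounded ((· < ·) : O → O → Prop) := (wellFoundedLT_toType μ.ord).wf
  -- initial segments are small
  have hseg : ∀ ν : O, #{z : O | z ≤ ν} ≤ lam := by
    intro ν
    have h1 : #(Set.Iio ν) < μ := Cardinal.mk_Iio_ord_toType ν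
    have h1' : #(Set.Iio ν) ≤ lam := Order.lt_succ_iff.mp (by rw [← hμdef]; exact h1)
    have hins : {z : O | z ≤ ν} = insert ν (Set.Iio ν) := by
      ext z
      simp only [Set.mem_setOf_eq, Set.mem_insert_iff, Set.mem_Iio]
      exact ⟨fun h => (lt_or_eq_of_le h).symm.imp id id, fun h => h.elim le_of_eq le_of_lt⟩
    rw [hins]
    calc #↥(insert ν (Set.Iio ν)) ≤ #(Set.Iio ν) + 1 := Cardinal.mk_insert_le
    _ ≤ lam + 1 := add_le_add_left h1' 1
    _ = lam := Cardinal.add_one_eq hl0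
  -- fibers
  have hFfin : ∀ x : X, {β | x ∈ A β}.Finite := fiber_finite hpf
  have hFcard : ∀ x : X, #{β | x ∈ A β} ≤ lam :=
    fun x => ((hFfin x).lt_aleph0.le).trans hl0
  -- the closure chain
  set step : Set ι × Set X → Set ι × Set X := fun JP =>
    (JP.1 ∪ ⋃ x ∈ JP.2, {β | x ∈ A β},
     JP.2 ∪ ⋃ α ∈ JP.1, ⋃ β ∈ JP.1, if α = β then ∅ else A α ∩ A β) with hstepdef
  set itJP : ℕ → O → Set ι × Set X := fun k ν => step^[k] ({α | e α ≤ ν}, ∅) with hitdef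
  set J : O → Set ι := fun ν => ⋃ k, (itJP k ν).1 with hJdef
  set P : O → Set X := fun ν => ⋃ k, (itJP k ν).2 with hPdef
  -- iterate recurrence
  have hitsucc : ∀ k ν, itJP (k+1) ν = step (itJP k ν) := by
    intro k ν
    rw [hitdef]
    simp only
    rw [Function.iterate_succ_apply']
  -- monotone in ν
  have hmono : ∀ k (ν ν' : O), ν ≤ ν' →
      (itJP k ν).1 ⊆ (itJP k ν').1 ∧ (itJP k ν).2 ⊆ (itJP k ν').2 := by
    intro k
    induction k with
    | zero =>
      intro ν ν' hν
      constructor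
      · intro α hα
        exact le_trans hα hν
      · exact subset_rfl
    | succ k ihk =>
      intro ν ν' hν
      obtain ⟨h1, h2⟩ := ihk ν ν' hν
      rw [hitsucc, hitsucc]
      constructor
      · apply Set.union_subset_union h1
        exact Set.iUnion₂_mono' fun x hx => ⟨x, h2 hx, subset_rfl⟩
      · apply Set.union_subset_union h2
        refine Set.iUnion₂_mono' fun α hα => ⟨α, h1 hα, ?_⟩
        exact Set.iUnion₂_mono' fun β hβ => ⟨β, h1 hβ, subset_rfl⟩
  have hJmono : ∀ {ν ν' : O}, ν ≤ ν' → J ν ⊆ J ν' := by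
    intro ν ν' hν
    exact Set.iUnion_mono fun k => (hmono k ν ν' hν).1
  -- iterates grow with k
  have hstepincl : ∀ k ν, (itJP k ν).1 ⊆ (itJP (k+1) ν).1 ∧ (itJP k ν).2 ⊆ (itJP (k+1) ν).2 := by
    intro k ν
    rw [hitsucc]
    exact ⟨Set.subset_union_left, Set.subset_union_left⟩
  have hklek : ∀ {k k' : ℕ}, k ≤ k' → ∀ ν,
      (itJP k ν).1 ⊆ (itJP k' ν).1 ∧ (itJP k ν).2 ⊆ (itJP k' ν).2 := by
    intro k k' hk
    induction hk with
    | refl => exact fun ν => ⟨subset_rfl, subset_rfl⟩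
    | @step k'' hkk ihk =>
      intro ν
      exact ⟨(ihk ν).1.trans (hstepincl k'' ν).1, (ihk ν).2.trans (hstepincl k'' ν).2⟩
  -- sizes
  have hsize : ∀ k ν, #(itJP k ν).1 ≤ lam ∧ #(itJP k ν).2 ≤ lam := by
    intro k
    induction k with
    | zero =>
      intro ν
      constructor
      · have hinj : Function.Injective
            (fun a : {α : ι | e α ≤ ν} => (⟨e a.1, a.2⟩ : {z : O | z ≤ ν})) := by
          intro a b hab
          apply Subtype.ext
          exact e.injective (congrArg Subtype.val hab)
        exact (Cardinal.mk_le_of_injective hinj).trans (hseg ν)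
      · simp [hitdef]
    | succ k ihk =>
      intro ν
      obtain ⟨h1, h2⟩ := ihk ν
      rw [hitsucc]
      constructor
      · refine (Cardinal.mk_union_le _ _).trans ?_
        have h3 : #↥(⋃ x ∈ (itJP k ν).2, {β | x ∈ A β}) ≤ lam :=
          mk_biUnion_le' _ _ hl0 h2 fun x _ => hFcard x
        calc #(itJP k ν).1 + #↥(⋃ x ∈ (itJP k ν).2, {β | x ∈ A β}) ≤ lam + lam :=
              add_le_add h1 h3
        _ = lam := Cardinal.add_eq_self hl0
      · refine (Cardinal.mk_union_le _ _).trans ?_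
        have h3 : #↥(⋃ α ∈ (itJP k ν).1, ⋃ β ∈ (itJP k ν).1,
            if α = β then ∅ else A α ∩ A β) ≤ lam := by
          refine mk_biUnion_le' _ _ hl0 h1 fun α _ => ?_
          refine mk_biUnion_le' _ _ hl0 h1 fun β _ => ?_
          by_cases hab : α = β
          · simp [hab]
          · rw [if_neg hab]
            exact (hint α β hab).trans hsl
        calc #(itJP k ν).2 + _ ≤ lam + lam := add_le_add h2 h3
        _ = lam := Cardinal.add_eq_self hl0
  have hPsize : ∀ ν, #(P ν) ≤ lam := by
    intro ν
    exact mk_iUnion_nat_le _ hl0 fun k => (hsize k ν).2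
  -- closure properties
  have hc1 : ∀ (ν : O) (x : X), x ∈ P ν → ∀ β, x ∈ A β → β ∈ J ν := by
    intro ν x hx β hβ
    obtain ⟨k, hk⟩ := Set.mem_iUnion.mp hx
    apply Set.mem_iUnion.mpr ⟨k + 1, ?_⟩
    rw [hitsucc]
    apply Set.mem_union_right
    exact Set.mem_iUnion₂.mpr ⟨x, hk, hβ⟩
  have hc2 : ∀ (ν : O) (α β : ι), α ∈ J ν → β ∈ J ν → α ≠ β → A α ∩ A β ⊆ P ν := by
    intro ν α β hα hβ hab x hx
    obtain ⟨k1, hk1⟩ := Set.mem_iUnion.mp hα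
    obtain ⟨k2, hk2⟩ := Set.mem_iUnion.mp hβ
    have hα' := (hklek (le_max_left k1 k2) ν).1 hk1
    have hβ' := (hklek (le_max_right k1 k2) ν).1 hk2
    apply Set.mem_iUnion.mpr ⟨max k1 k2 + 1, ?_⟩
    rw [hitsucc]
    apply Set.mem_union_right
    apply Set.mem_iUnion₂.mpr ⟨α, hα', ?_⟩
    apply Set.mem_iUnion₂.mpr ⟨β, hβ', ?_⟩
    rw [if_neg hab]
    exact hx
  -- birth times
  have hbirth : ∀ α, α ∈ J (e α) := by
    intro α
    apply Set.mem_iUnion.mpr ⟨0, ?_⟩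
    simp [hitdef]
  set i : ι → O := fun α => wfO.min {ν | α ∈ J ν} ⟨e α, hbirth α⟩ with hidef
  have hiJ : ∀ α, α ∈ J (i α) := fun α => wfO.min_mem {ν | α ∈ J ν} ⟨e α, hbirth α⟩
  have hile : ∀ α ν, α ∈ J ν → i α ≤ ν := by
    intro α ν hν
    exact not_lt.mp (wfO.not_lt_min {ν' | α ∈ J ν'} hν)
  -- traces
  set T : ι → Set X := fun α => A α ∩ P (i α) with hTdef
  have hTsize : ∀ α, #(T α) ≤ lam := by
    intro α
    exact (Cardinal.mk_le_mk_of_subset Set.inter_subset_right).trans (hPsize (i α))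
  have hTpf : PointLt ℵ₀ T := pointLt_mono (fun α => Set.inter_subset_left) hpf
  have hTint : ∀ α β, α ≠ β → #↥(T α ∩ T β) ≤ σ := by
    intro α β hab
    refine (Cardinal.mk_le_mk_of_subset ?_).trans (hint α β hab)
    exact Set.inter_subset_inter Set.inter_subset_left Set.inter_subset_left
  obtain ⟨R, hR, hRpt⟩ := ih σ hσ T hTpf hTsize hTint
  refine ⟨R, fun α => ⟨(hR α).1.trans Set.inter_subset_left, (hR α).2⟩, ?_⟩
  intro I hI
  by_contra hne
  obtain ⟨x, hx⟩ := Set.nonempty_iff_ne_empty.mpr hne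
  have hxA : ∀ α ∈ I, x ∈ A α ∧ x ∉ R α := fun α hα => Set.mem_iInter₂.mp hx α hα
  have hIne : I.Nonempty := by
    rw [← Set.nonempty_coe_sort]
    apply Cardinal.mk_ne_zero_iff.mp
    rw [hI]
    have hcast : (((n+1 : ℕ) : Cardinal.{w}) + 1) = ((n+2 : ℕ) : Cardinal.{w}) := by
      push_cast; ring
    rw [hcast]
    exact Nat.cast_ne_zero.mpr (by omega)
  -- pick minimal birth
  obtain ⟨m, hmmem, hmmin⟩ : ∃ m ∈ i '' I, ∀ z ∈ i '' I, ¬ z < m :=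
    ⟨wfO.min (i '' I) (hIne.image i), wfO.min_mem _ _, fun z hz => wfO.not_lt_min _ hz⟩
  obtain ⟨α₀, hα₀I, hα₀m⟩ := hmmem
  have hα₀min : ∀ β ∈ I, i α₀ ≤ i β := by
    intro β hβ
    rw [hα₀m]
    exact not_lt.mp (hmmin (i β) (Set.mem_image_of_mem i hβ))
  -- cardinality of I minus a point
  have hmkI' : #(I \ {α₀} : Set ι) = (n : Cardinal.{w}) + 1 := by
    have hins : insert α₀ (I \ {α₀}) = I := by
      rw [Set.insert_diff_singleton]
      exact Set.insert_eq_of_mem hα₀I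
    have hnm : α₀ ∉ (I \ {α₀} : Set ι) := fun h => h.2 rfl
    have h4 : #I = #(I \ {α₀} : Set ι) + 1 := by
      conv_lhs => rw [← hins]
      rw [Cardinal.mk_insert hnm]
    have h5 : #(I \ {α₀} : Set ι) < ℵ₀ := by
      have : #(I \ {α₀} : Set ι) ≤ #I := Cardinal.mk_le_mk_of_subset Set.diff_subset
      apply lt_of_le_of_lt this
      rw [hI]
      have : (((n+1 : ℕ) : Cardinal.{w}) + 1) = ((n+2 : ℕ) : Cardinal.{w}) := by push_cast; ring
      rw [this]
      exact Cardinal.nat_lt_aleph0 _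
    obtain ⟨m', hm'⟩ := Cardinal.lt_aleph0.mp h5
    rw [hm', hI] at h4
    have e1 : ((n+2 : ℕ) : Cardinal.{w}) = ((n+1 : ℕ) : Cardinal.{w}) + 1 := by push_cast; ring
    have e2 : ((m'+1 : ℕ) : Cardinal.{w}) = (m' : Cardinal.{w}) + 1 := by push_cast; ring
    have h6 : ((n+2 : ℕ) : Cardinal.{w}) = ((m'+1 : ℕ) : Cardinal.{w}) := by
      rw [e1, h4]
      exact e2.symm
    have h7 : m' = n + 1 := by
      have := Nat.cast_inj.mp h6
      omega
    rw [hm', h7]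
    push_cast
    ring
  -- x is in the traces of all non-minimal members
  have hxT : x ∈ ⋂ β ∈ (I \ {α₀} : Set ι), (T β \ R β) := by
    apply Set.mem_iInter₂.mpr
    rintro β ⟨hβI, hβne⟩
    have hβα₀ : β ≠ α₀ := hβne
    have hxP : x ∈ P (i β) :=
      hc2 (i β) β α₀ (hiJ β) (hJmono (hα₀min β hβI) (hiJ α₀)) hβα₀
        ⟨(hxA β hβI).1, (hxA α₀ hα₀I).1⟩
    exact ⟨⟨(hxA β hβI).1, hxP⟩, (hxA β hβI).2⟩
  rw [hRpt _ hmkI'] at hxT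
  exact hxT

end AuxMain

section AuxStep
universe w

private lemma aux_step (n : ℕ) (ih : AuxStmt.{w} n) : AuxStmt.{w} (n+1) := by
  intro ι X σ hσ A hpf hcard hint
  classical
  set μ : Cardinal.{w} := (Order.succ)^[n+1] σ with hμdef
  have hm0 : ℵ₀ ≤ μ := hσ.trans (le_succIter σ (n+1))
  -- the intersection relation and its components
  set rel : ι → ι → Prop := fun α β => (A α ∩ A β).Nonempty with hreldef
  set RT : ι → ι → Prop := Relation.ReflTransGen rel with hRTdef
  have hsym : ∀ {α β}, RT α β → RT β α := by
    intro α β h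
    haveI : Std.Symm rel := ⟨fun a b ⟨x, hx⟩ => ⟨x, hx.2, hx.1⟩⟩
    exact (Relation.ReflTransGen.stdSymm (r := rel)).symm _ _ h
  set c : ι → Set ι := fun α => {β | RT α β} with hcdef
  have hmemc : ∀ α, α ∈ c α := fun α => Relation.ReflTransGen.refl
  have hceq : ∀ {α β}, RT α β → c α = c β := by
    intro α β h
    ext γ
    exact ⟨fun h2 => (hsym h).trans h2, fun h2 => h.trans h2⟩
  -- neighbourhood sizes
  have hFfin : ∀ x : X, {β | x ∈ A β}.Finite := fiber_finite hpf
  have hNb : ∀ β, #{γ | rel β γ} ≤ μ := by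
    intro β
    have he : {γ | rel β γ} = ⋃ x ∈ A β, {γ | x ∈ A γ} := by
      ext γ
      simp only [Set.mem_setOf_eq, Set.mem_iUnion, exists_prop]
      exact ⟨fun ⟨x, hx⟩ => ⟨x, hx.1, hx.2⟩, fun ⟨x, h1, h2⟩ => ⟨x, h1, h2⟩⟩
    rw [he]
    exact mk_biUnion_le' _ _ hm0 (hcard β) fun x _ => ((hFfin x).lt_aleph0.le).trans hm0
  -- reachable sets
  set Rk : ℕ → ι → Set ι := fun k => Nat.rec (fun α => {α})
    (fun _ Rp α => Rp α ∪ ⋃ β ∈ Rp α, {γ | rel β γ}) k with hRkdef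
  have hRk0 : ∀ α, Rk 0 α = {α} := fun α => rfl
  have hRksucc : ∀ k α, Rk (k+1) α = Rk k α ∪ ⋃ β ∈ Rk k α, {γ | rel β γ} := fun k α => rfl
  have hRksize : ∀ k α, #(Rk k α) ≤ μ := by
    intro k
    induction k with
    | zero =>
      intro α
      rw [hRk0]
      have : #({α} : Set ι) = 1 := Cardinal.mk_singleton α
      rw [this]
      exact le_trans (by exact_mod_cast Cardinal.one_le_aleph0) hm0
    | succ k ihk =>
      intro α
      rw [hRksucc]
      refine (Cardinal.mk_union_le _ _).trans ?_
      have h3 := mk_biUnion_le' (Rk k α) (fun β => {γ | rel β γ}) hm0 (ihk α) fun β _ => hNb β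
      calc #(Rk k α) + #↥(⋃ β ∈ Rk k α, {γ | rel β γ}) ≤ μ + μ := add_le_add (ihk α) h3
      _ = μ := Cardinal.add_eq_self hm0
  have hcsub : ∀ α, c α ⊆ ⋃ k, Rk k α := by
    intro α β hβ
    induction hβ with
    | refl =>
      exact Set.mem_iUnion.mpr ⟨0, by rw [hRk0]; exact rfl⟩
    | @tail β' γ h1 h2 ih2 =>
      obtain ⟨k, hk⟩ := Set.mem_iUnion.mp ih2
      refine Set.mem_iUnion.mpr ⟨k+1, ?_⟩
      rw [hRksucc]
      exact Set.mem_union_right _ (Set.mem_iUnion₂.mpr ⟨β', hk, h2⟩)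
  have hcsize : ∀ α, #(c α) ≤ μ := by
    intro α
    refine (Cardinal.mk_le_mk_of_subset (hcsub α)).trans ?_
    exact mk_iUnion_nat_le _ hm0 fun k => hRksize k α
  -- solutions on components
  have hex : ∀ S : Set ι, #↥S ≤ μ →
      ∃ R : ↥S → Set X, (∀ b, R b ⊆ A ↑b ∧ #(R b) ≤ σ) ∧
        PointLt (((n+1 : ℕ) : Cardinal.{w}) + 1) (fun b : ↥S => A ↑b \ R b) := by
    intro S hS
    exact aux_small n ih σ hσ (fun b : ↥S => A ↑b) (pointLt_restrict hpf S)
      (fun b => hcard ↑b)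
      (fun b b' hbb' => hint ↑b ↑b' (fun h => hbb' (Subtype.ext h))) hS
  set G : Set ι → ι → Set X := fun S α =>
    if hS : #↥S ≤ μ then
      (if hα : α ∈ S then Classical.choose (hex S hS) ⟨α, hα⟩ else ∅)
    else ∅ with hGdef
  set A' : ι → Set X := fun α => G (c α) α with hA'def
  have hA'eq : ∀ α, A' α = Classical.choose (hex (c α) (hcsize α)) ⟨α, hmemc α⟩ := by
    intro α
    show G (c α) α = _
    rw [hGdef]
    simp only
    rw [dif_pos (hcsize α), dif_pos (hmemc α)]
  refine ⟨A', fun α => ?_, ?_⟩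
  · have hspec := (Classical.choose_spec (hex (c α) (hcsize α))).1 ⟨α, hmemc α⟩
    rw [hA'eq α]
    exact hspec
  · have hG : ∀ (S : Set ι) (hS : #↥S ≤ μ) (β : ι) (hβ : β ∈ S),
        G S β = Classical.choose (hex S hS) ⟨β, hβ⟩ := by
      intro S hS β hβ
      show G S β = _
      rw [hGdef]
      simp only
      rw [dif_pos hS, dif_pos hβ]
    intro I hI
    by_contra hne
    obtain ⟨x, hx⟩ := Set.nonempty_iff_ne_empty.mpr hne
    have hxA : ∀ α ∈ I, x ∈ A α ∧ x ∉ A' α := fun α hα => Set.mem_iInter₂.mp hx α hα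
    have hIne : I.Nonempty := by
      rw [← Set.nonempty_coe_sort]
      apply Cardinal.mk_ne_zero_iff.mp
      rw [hI]
      have hcast : (((n+1 : ℕ) : Cardinal.{w}) + 1) = ((n+2 : ℕ) : Cardinal.{w}) := by
        push_cast; ring
      rw [hcast]
      exact Nat.cast_ne_zero.mpr (by omega)
    obtain ⟨α₀, hα₀⟩ := hIne
    have hcS : ∀ β ∈ I, c β = c α₀ := by
      intro β hβ
      exact (hceq (Relation.ReflTransGen.single ⟨x, (hxA α₀ hα₀).1, (hxA β hβ).1⟩)).symm
    have hIS : ∀ β ∈ I, β ∈ c α₀ := by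
      intro β hβ
      rw [← hcS β hβ]
      exact hmemc β
    set Ihat : Set ↥(c α₀) := {b | ↑b ∈ I} with hIhatdef
    have hmkIhat : #↥Ihat = ((n+1 : ℕ) : Cardinal.{w}) + 1 := by
      rw [← hI]
      apply Cardinal.mk_congr
      exact {
        toFun := fun b => ⟨↑↑b, b.2⟩
        invFun := fun β => ⟨⟨↑β, hIS ↑β β.2⟩, β.2⟩
        left_inv := fun b => by ext; rfl
        right_inv := fun β => by ext; rfl }
    have hspec2 := (Classical.choose_spec (hex (c α₀) (hcsize α₀))).2 Ihat hmkIhat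
    have hxin : x ∈ ⋂ b ∈ Ihat, (A ↑b \ Classical.choose (hex (c α₀) (hcsize α₀)) b) := by
      apply Set.mem_iInter₂.mpr
      intro b hb
      refine ⟨(hxA ↑b hb).1, fun hmem => (hxA ↑b hb).2 ?_⟩
      have h8 : A' (↑b : ι) = G (c ↑b) ↑b := rfl
      rw [h8, hcS ↑b hb, hG (c α₀) (hcsize α₀) ↑b (hIS ↑b hb)]
      have hbeq : (⟨↑b, hIS ↑b hb⟩ : ↥(c α₀)) = b := by ext; rfl
      rw [hbeq]
      exact hmem
    rw [hspec2] at hxin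
    exact hxin

private lemma aux_all : ∀ n : ℕ, AuxStmt.{w} n := by
  intro n
  induction n with
  | zero => exact aux_zero
  | succ n ihn => exact aux_step n ihn

end AuxStep

private lemma mk_down_set {X : Type v} (s : Set X) :
    #↥{x : ULift.{u} X | x.down ∈ s} = Cardinal.lift.{u} (#↥s) := by
  rw [← Cardinal.mk_uLift]
  apply Cardinal.mk_congr
  exact {
    toFun := fun x => ⟨⟨x.1.down, x.2⟩⟩
    invFun := fun y => ⟨⟨y.down.1⟩, y.down.2⟩
    left_inv := fun x => rfl
    right_inv := fun y => rfl }

/-- Let `n ≥ 1` and let `σ` be a regular infinite cardinal.  If `⟨A_α⟩` is a point-finite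
family of sets with `|A_α| ≤ σ⁺ⁿ` and `|A_α ∩ A_β| ≤ σ` for distinct `α, β`, then one can
remove a set of size at most `σ` from each `A_α` so that the family becomes
point-`< n+1`. -/
theorem pointFinite_refine_pointLtSucc {ι : Type u} {X : Type v}
    (n : ℕ) (hn : 1 ≤ n) (σ : Cardinal.{v}) (hσ : σ.IsRegular)
    (A : ι → Set X)
    (hpf : PointLt ℵ₀ A)
    (hcard : ∀ α, Cardinal.mk (A α) ≤ (Order.succ)^[n] σ)
    (hint : ∀ α β, α ≠ β → Cardinal.mk ↥(A α ∩ A β) ≤ σ) :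
    ∃ A' : ι → Set X, (∀ α, A' α ⊆ A α ∧ Cardinal.mk (A' α) ≤ σ) ∧
      PointLt (n + 1) (fun α => A α \ A' α) := by
  classical
  set σ' : Cardinal.{max u v} := Cardinal.lift.{u} σ with hσ'def
  have hσ' : ℵ₀ ≤ σ' := by
    have h1 := Cardinal.lift_le.{u}.mpr hσ.aleph0_le
    rwa [Cardinal.lift_aleph0] at h1
  set B : ULift.{v} ι → Set (ULift.{u} X) := fun a => {x | x.down ∈ A a.down} with hBdef
  -- point-finiteness transports
  have hBpf : PointLt ℵ₀ B := by
    intro I hI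
    set Iι : Set ι := ULift.down '' I with hIιdef
    have hdowninj : Function.Injective (ULift.down : ULift.{v} ι → ι) := ULift.down_injective
    have h1 : Cardinal.lift.{max u v} (#↥Iι) = Cardinal.lift.{u} (#↥I) :=
      Cardinal.mk_image_eq_lift _ I hdowninj
    have h2 : #↥Iι = ℵ₀ := by
      apply Cardinal.lift_eq_aleph0.mp
      rw [h1, hI, Cardinal.lift_aleph0]
    have h3 := hpf Iι h2
    apply Set.eq_empty_iff_forall_notMem.mpr
    intro x hx
    have h4 : x.down ∈ ⋂ α ∈ Iι, A α := by
      apply Set.mem_iInter₂.mpr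
      rintro α ⟨a, haI, rfl⟩
      exact Set.mem_iInter₂.mp hx a haI
    rw [h3] at h4
    exact h4
  have hBcard : ∀ a, #(B a) ≤ (Order.succ)^[n] σ' := by
    intro a
    have h1 : #(B a) = Cardinal.lift.{u} (#(A a.down)) := mk_down_set (A a.down)
    rw [h1, hσ'def, ← lift_succIter]
    exact Cardinal.lift_le.mpr (hcard a.down)
  have hBint : ∀ a b, a ≠ b → #↥(B a ∩ B b) ≤ σ' := by
    intro a b hab
    have hd : a.down ≠ b.down := fun h => hab (ULift.down_injective h)
    have he : B a ∩ B b = {x : ULift.{u} X | x.down ∈ A a.down ∩ A b.down} := rfl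
    rw [he, mk_down_set, hσ'def]
    exact Cardinal.lift_le.mpr (hint a.down b.down hd)
  obtain ⟨B', hB', hBpt⟩ := aux_all.{max u v} n σ' hσ' B hBpf hBcard hBint
  set A' : ι → Set X := fun α => {x | (⟨x⟩ : ULift.{u} X) ∈ B' ⟨α⟩} with hA'def
  have hBA' : ∀ α, B' ⟨α⟩ = {x : ULift.{u} X | x.down ∈ A' α} := by
    intro α
    ext y
    exact Iff.rfl
  refine ⟨A', fun α => ⟨?_, ?_⟩, ?_⟩
  · intro x hx
    exact (hB' ⟨α⟩).1 hx
  · have h1 : #(B' ⟨α⟩) ≤ σ' := (hB' ⟨α⟩).2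
    rw [hBA' α, mk_down_set, hσ'def] at h1
    exact Cardinal.lift_le.mp h1
  · intro I hI
    set I' : Set (ULift.{v} ι) := ULift.up '' I with hI'def
    have hupinj : Function.Injective (ULift.up : ι → ULift.{v} ι) := ULift.up_injective
    have h1 : Cardinal.lift.{u} (#↥I') = Cardinal.lift.{max u v} (#↥I) :=
      Cardinal.mk_image_eq_lift _ I hupinj
    have h2 : #↥I' = ((n : Cardinal.{max u v}) + 1) := by
      have h3 : ((n : Cardinal.{u}) + 1) = ((n+1 : ℕ) : Cardinal.{u}) := by push_cast; ring
      rw [h3] at hI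
      have h4 : Cardinal.lift.{u} (#↥I') = ((n+1 : ℕ) : Cardinal.{max u v}) := by
        rw [h1, hI, Cardinal.lift_natCast]
      have h5 := Cardinal.lift_eq_nat_iff.mp h4
      rw [h5]
      push_cast
      ring
    have h6 := hBpt I' h2
    apply Set.eq_empty_iff_forall_notMem.mpr
    intro x hx
    have h7 : (⟨x⟩ : ULift.{u} X) ∈ ⋂ a ∈ I', (B a \ B' a) := by
      apply Set.mem_iInter₂.mpr
      rintro a ⟨α, hαI, rfl⟩
      have h8 := Set.mem_iInter₂.mp hx α hαI
      exact ⟨h8.1, fun hmem => h8.2 hmem⟩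
    rw [h6] at h7
    exact h7
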